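/- Let X be a nonzero positive semidefinite 2^n × 2^n complex matrix and let s > 1. Then Ent(X^s)/τ(X^s) ≥ (ln ‖X‖_s − ln ‖X‖₁)/(1 − 1/s). -/

import Mathlib

noncomputable section

open scoped Matrix ComplexOrder

/-- The algebra of operators on `(ℂ²)^{⊗ n}`, as `2^n × 2^n` matrices indexed by `Fin n → Fin 2`. -/
abbrev Mq (n : ℕ) := Matrix (Fin n → Fin 2) (Fin n → Fin 2) ℂ

/-- Normalized trace `τ(X) = 2^{-n} tr X`. -/
def qTau {n : ℕ} (X : Mq n) : ℂ := ((2 : ℂ) ^ n)⁻¹ * X.trace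

/-- Real part of the normalized trace. -/
def qTauR {n : ℕ} (X : Mq n) : ℝ := (qTau X).re

/-- Normalized Hilbert–Schmidt inner product `⟨X, Y⟩ = τ(X† Y)`. -/
def qInner {n : ℕ} (X Y : Mq n) : ℂ := qTau (Xᴴ * Y)

/-- `|X| = √(X† X)`. -/
def mAbs {n : ℕ} (X : Mq n) : Mq n :=
  (Matrix.posSemidef_conjTranspose_mul_self X).1.eigenvectorUnitary.1 *
    Matrix.diagonal ((↑) ∘ Real.sqrt ∘ (Matrix.posSemidef_conjTranspose_mul_self X).1.eigenvalues) *
    (star (Matrix.posSemidef_conjTranspose_mul_self X).1.eigenvectorUnitary : Mq n)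

/-- The entropy `Ent(X) = τ(X ln X) − τ(X) ln τ(X)` (with the convention `0 ln 0 = 0`),
for positive semidefinite `X`, via the continuous functional calculus. -/
def mEnt {n : ℕ} (X : Mq n) : ℝ :=
  qTauR (cfc (fun x : ℝ => x * Real.log x) X) - qTauR X * Real.log (qTauR X)

/-- Real powers `X^p` of a positive semidefinite matrix, by functional calculus on the
support (`0 ^ p = 0` for `p ≠ 0`). -/
def mPow {n : ℕ} (X : Mq n) (p : ℝ) : Mq n := cfc (fun x : ℝ => x ^ p) X

/-- Normalized Schatten `p`-norm `‖X‖_p = (τ(|X|^p))^{1/p}`. -/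
def schatten {n : ℕ} (p : ℝ) (X : Mq n) : ℝ := qTauR (mPow (mAbs X) p) ^ (1 / p)

/-- Conditional expectation onto the `i`-th qubit being maximally mixed:
`E_i = I^{⊗(i-1)} ⊗ (τ(·) I) ⊗ I^{⊗(n-i)}`. -/
def condExpQ {n : ℕ} (i : Fin n) (X : Mq n) : Mq n :=
  Matrix.of fun a b =>
    if a i = b i then
      (2 : ℂ)⁻¹ * ∑ c : Fin 2, X (Function.update a i c) (Function.update b i c)
    else 0

/-- The Lindblad generator `K_n = Σ_i L̂_i`, where `L̂_i` acts as `L(X) = X − τ(X) I`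
on the `i`-th tensor factor. -/
def Kq (n : ℕ) (X : Mq n) : Mq n := ∑ i : Fin n, (X - condExpQ i X)

/-- The depolarizing channel on the `i`-th qubit:
`e^{-t} X + (1 - e^{-t}) τ_i(X) ⊗ I_i`. -/
def depolStep {n : ℕ} (t : ℝ) (i : Fin n) (X : Mq n) : Mq n :=
  (Real.exp (-t) : ℂ) • X + ((1 : ℂ) - (Real.exp (-t) : ℂ)) • condExpQ i X

/-- `Ψ_t^{⊗ n}`: the `n`-fold tensor power of the qubit depolarizing channel, i.e. the
composition over all qubits `i` of the depolarizing channel acting on the `i`-th factor. -/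
def psiDep {n : ℕ} (t : ℝ) (X : Mq n) : Mq n :=
  (List.finRange n).foldr (fun i Y => depolStep t i Y) X

/-- The binary entropy function `h(s) = −s ln s − (1−s) ln(1−s)`. -/
def binEnt (s : ℝ) : ℝ := -(s * Real.log s) - (1 - s) * Real.log (1 - s)

/-- `h⁻¹ : [0, ln 2] → [0, 1/2]`, the inverse of the restriction of the binary entropy
function to `[0, 1/2]`. -/
def binEntInv (y : ℝ) : ℝ := Function.invFunOn binEnt (Set.Icc 0 (1 / 2)) y

/-- `φ(ξ) = 1/2 − √(h⁻¹(ln 2 − ξ)(1 − h⁻¹(ln 2 − ξ)))`. -/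
def phiF (ξ : ℝ) : ℝ :=
  1 / 2 - Real.sqrt (binEntInv (Real.log 2 - ξ) * (1 - binEntInv (Real.log 2 - ξ)))

/-- `α(ξ) = φ(ξ)/ξ` for `ξ ∈ (0, ln 2]`, with `α(0) = 1/2` by continuous extension. -/
def alphaF (ξ : ℝ) : ℝ := if ξ = 0 then 1 / 2 else ξ⁻¹ * phiF ξ


open Finset in
theorem key_scalar {ι : Type*} [Fintype ι] (lam : ι → ℝ) (h0 : ∀ i, 0 ≤ lam i)
    (hne : ∃ i, 0 < lam i) (s : ℝ) (hs : 1 < s) :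
    Real.log (∑ i, lam i ^ s) - Real.log (∑ i, lam i) ≤
      (s - 1) * (∑ i, lam i ^ s * Real.log (lam i)) / (∑ i, lam i ^ s) := by
  classical
  obtain ⟨j, hj⟩ := hne
  have hs0 : (0:ℝ) < s := by linarith
  set t : Finset ι := Finset.univ.filter (fun i => 0 < lam i) with ht
  have hzero : ∀ i, ¬ (0 < lam i) → lam i ^ s = 0 := by
    intro i hi
    have : lam i = 0 := le_antisymm (not_lt.1 hi) (h0 i)
    rw [this, Real.zero_rpow (ne_of_gt hs0)]
  have hTs_eq : (∑ i, lam i ^ s) = ∑ i ∈ t, lam i ^ s := by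
    rw [ht, Finset.sum_filter_of_ne]
    intro i _ h
    by_contra hc
    exact h (hzero i hc)
  have hT1_eq : (∑ i, lam i) = ∑ i ∈ t, lam i := by
    rw [ht, Finset.sum_filter_of_ne]
    intro i _ h
    exact lt_of_le_of_ne (h0 i) (Ne.symm h)
  have hD_eq : (∑ i, lam i ^ s * Real.log (lam i)) = ∑ i ∈ t, lam i ^ s * Real.log (lam i) := by
    rw [ht, Finset.sum_filter_of_ne]
    intro i _ h
    by_contra hc
    exact h (by rw [hzero i hc, zero_mul])
  set Ts := ∑ i, lam i ^ s with hTs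
  set T1 := ∑ i, lam i with hT1
  set D := ∑ i, lam i ^ s * Real.log (lam i) with hD
  have hTs_pos : 0 < Ts := by
    have : 0 < lam j ^ s := Real.rpow_pos_of_pos hj s
    exact Finset.sum_pos' (fun i _ => Real.rpow_nonneg (h0 i) s) ⟨j, Finset.mem_univ j, this⟩
  have hT1_pos : 0 < T1 :=
    Finset.sum_pos' (fun i _ => h0 i) ⟨j, Finset.mem_univ j, hj⟩
  set q : ι → ℝ := fun i => lam i ^ s / Ts with hq
  have hq0 : ∀ i ∈ t, 0 ≤ q i := fun i _ => div_nonneg (Real.rpow_nonneg (h0 i) s) hTs_pos.le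
  have hq1 : ∑ i ∈ t, q i = 1 := by
    rw [hq, ← Finset.sum_div, ← hTs_eq, div_self hTs_pos.ne']
  have jensen := convexOn_exp.map_sum_le (t := t) (w := q)
      (p := fun i => (1 - s) * Real.log (lam i)) hq0 hq1 (fun i _ => Set.mem_univ _)
  have hlt : ∀ i ∈ t, 0 < lam i := by
    intro i hi; exact (Finset.mem_filter.1 hi).2
  have hexp : ∀ i ∈ t, q i • Real.exp ((1 - s) * Real.log (lam i)) = lam i / Ts := by
    intro i hi
    have hli := hlt i hi
    have he : Real.exp ((1 - s) * Real.log (lam i)) = lam i ^ (1 - s) := by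
      rw [Real.rpow_def_of_pos hli, mul_comm]
    rw [smul_eq_mul, he, hq]
    rw [div_mul_eq_mul_div, ← Real.rpow_add hli]
    norm_num
  have hsum_exp : ∑ i ∈ t, q i • Real.exp ((1 - s) * Real.log (lam i)) = T1 / Ts := by
    rw [Finset.sum_congr rfl hexp, ← Finset.sum_div, ← hT1_eq]
  rw [hsum_exp] at jensen
  have hlog := Real.log_le_log (Real.exp_pos _) jensen
  rw [Real.log_exp, Real.log_div hT1_pos.ne' hTs_pos.ne'] at hlog
  have hlhs : ∑ i ∈ t, q i • ((1 - s) * Real.log (lam i)) =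
      (1 - s) * (∑ i ∈ t, lam i ^ s * Real.log (lam i)) / Ts := by
    rw [Finset.mul_sum, Finset.sum_div]
    apply Finset.sum_congr rfl
    intro i hi
    rw [smul_eq_mul, hq]
    field_simp
  rw [hlhs, ← hD_eq] at hlog
  have : (s - 1) * D / Ts = -((1 - s) * D / Ts) := by ring
  rw [this]
  linarith

lemma qTauR_cfc {n : ℕ} {X : Mq n} (hX : X.IsHermitian) (f : ℝ → ℝ) :
    qTauR (cfc f X) = ((2:ℝ)^n)⁻¹ * ∑ i, f (hX.eigenvalues i) := by
  rw [hX.cfc_eq]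
  unfold Matrix.IsHermitian.cfc qTauR qTau
  rw [Unitary.conjStarAlgAut_apply, Matrix.trace_mul_cycle, Matrix.mem_unitaryGroup_iff'.mp (hX.eigenvectorUnitary).2,
    one_mul, Matrix.trace_diagonal]
  have : ∑ i, (RCLike.ofReal ∘ f ∘ hX.eigenvalues) i
      = ((∑ i, f (hX.eigenvalues i) : ℝ) : ℂ) := by
    push_cast; rfl
  rw [this]
  have h2 : ((2:ℂ)^n)⁻¹ = ((((2:ℝ)^n)⁻¹ : ℝ) : ℂ) := by push_cast; ring
  rw [h2, ← Complex.ofReal_mul, Complex.ofReal_re]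

lemma mAbs_eq {n : ℕ} {X : Mq n} (hX : X.PosSemidef) : mAbs X = X := by
  open MatrixOrder in
  have h0 : (0 : Mq n) ≤ X := hX.nonneg
  have hm : mAbs X = cfc Real.sqrt (Xᴴ * X) := by
    rw [(Matrix.posSemidef_conjTranspose_mul_self X).1.cfc_eq]; rfl
  open MatrixOrder in
  have h2 : (0 : Mq n) ≤ X ^ 2 := by
    rw [pow_two]; nth_rewrite 1 [← hX.1.eq]
    exact (Matrix.posSemidef_conjTranspose_mul_self X).nonneg
  open MatrixOrder in
  rw [hm, hX.1.eq, ← pow_two, ← cfcₙ_eq_cfc, ← CFC.sqrt_eq_real_sqrt (X ^ 2) h2, CFC.sqrt_sq X h0]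

lemma final_alg (a b c D Ts w s : ℝ) (hw : 0 < w) (hTs : 0 < Ts) (hs : 1 < s)
    (hkey : b - c ≤ (s - 1) * D / Ts) :
    (1/s * (a + b) - (a + c)) / (1 - 1/s) ≤ (w * (s * D) - w * Ts * (a + b)) / (w * Ts) := by
  have hs0 : (0:ℝ) < s := by linarith
  have h1 : (w * (s * D) - w * Ts * (a + b)) / (w * Ts) = s * (D / Ts) - a - b := by
    field_simp
    ring
  rw [h1]
  have hs1 : (0:ℝ) < 1 - 1/s := by
    rw [sub_pos, div_lt_one hs0]; exact hs
  rw [div_le_iff₀ hs1]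
  have hkey2 : b - c ≤ s * (D / Ts) - D / Ts := by
    have h2 : (s - 1) * D / Ts = s * (D / Ts) - D / Ts := by ring
    linarith [h2 ▸ hkey]
  have hexp : (s * (D / Ts) - a - b) * (1 - 1/s)
      = s * (D / Ts) - a - b - D / Ts + a * (1/s) + b * (1/s) := by
    field_simp
    ring
  rw [hexp]
  linarith

/-- Lemma 1(iii) of the paper: `Ent(X^s)/τ(X^s) ≥ (ln ‖X‖_s − ln ‖X‖₁)/(1 − 1/s)`. -/
theorem entropy_ratio_lower_bound (n : ℕ) (X : Mq n) (hX : X.PosSemidef) (hX0 : X ≠ 0)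
    (s : ℝ) (hs : 1 < s) :
    (Real.log (schatten s X) - Real.log (schatten 1 X)) / (1 - 1 / s) ≤
      mEnt (mPow X s) / qTauR (mPow X s) := by
  have hH : X.IsHermitian := hX.1
  have hlam0 : ∀ i, 0 ≤ hH.eigenvalues i := hX.eigenvalues_nonneg
  have hex : ∃ i, 0 < hH.eigenvalues i := by
    by_contra h
    push_neg at h
    apply hX0
    have hall : ∀ i, hH.eigenvalues i = 0 := fun i => le_antisymm (h i) (hlam0 i)
    have hd : Matrix.diagonal (RCLike.ofReal ∘ hH.eigenvalues) = (0 : Mq n) := by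
      have he : (RCLike.ofReal ∘ hH.eigenvalues : (Fin n → Fin 2) → ℂ) = fun _ => 0 := by
        funext i; simp [Function.comp, hall i]
      rw [he]
      exact Matrix.diagonal_zero
    rw [hH.spectral_theorem, hd, map_zero]
  obtain ⟨j, hj⟩ := hex
  have hs0 : (0:ℝ) < s := by linarith
  have hw0 : (0:ℝ) < ((2:ℝ)^n)⁻¹ := by positivity
  have hTs_pos : 0 < ∑ i, hH.eigenvalues i ^ s :=
    Finset.sum_pos' (fun i _ => Real.rpow_nonneg (hlam0 i) s)
      ⟨j, Finset.mem_univ j, Real.rpow_pos_of_pos hj s⟩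
  have hT1_pos : 0 < ∑ i, hH.eigenvalues i :=
    Finset.sum_pos' (fun i _ => hlam0 i) ⟨j, Finset.mem_univ j, hj⟩
  have hkey := key_scalar hH.eigenvalues hlam0 ⟨j, hj⟩ s hs
  have habs := mAbs_eq hX
  have hcont_pow : Continuous (fun x : ℝ => x ^ s) := Real.continuous_rpow_const hs0.le
  have h1 : qTauR (mPow X s) = ((2:ℝ)^n)⁻¹ * ∑ i, hH.eigenvalues i ^ s := by
    unfold mPow; rw [qTauR_cfc hH]
  have h2 : schatten s X = (((2:ℝ)^n)⁻¹ * ∑ i, hH.eigenvalues i ^ s) ^ (1/s) := by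
    unfold schatten; rw [habs, h1]
  have h3 : schatten 1 X = ((2:ℝ)^n)⁻¹ * ∑ i, hH.eigenvalues i := by
    unfold schatten mPow
    rw [habs, qTauR_cfc hH]
    norm_num [Real.rpow_one]
  have hcomp : cfc (fun x : ℝ => x * Real.log x) (mPow X s)
      = cfc ((fun x : ℝ => x * Real.log x) ∘ (fun x : ℝ => x ^ s)) X := by
    unfold mPow
    exact (cfc_comp (fun x : ℝ => x * Real.log x) (fun x : ℝ => x ^ s) X hH
      Real.continuous_mul_log.continuousOn hcont_pow.continuousOn).symm
  have h4 : mEnt (mPow X s) = ((2:ℝ)^n)⁻¹ * (s * ∑ i, hH.eigenvalues i ^ s * Real.log (hH.eigenvalues i))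
      - (((2:ℝ)^n)⁻¹ * ∑ i, hH.eigenvalues i ^ s)
        * Real.log (((2:ℝ)^n)⁻¹ * ∑ i, hH.eigenvalues i ^ s) := by
    unfold mEnt
    rw [hcomp, h1, qTauR_cfc hH]
    congr 1
    congr 1
    rw [Finset.mul_sum]
    apply Finset.sum_congr rfl
    intro i _
    simp only [Function.comp]
    rcases eq_or_lt_of_le (hlam0 i) with h|h
    · rw [← h, Real.zero_rpow hs0.ne']
      simp
    · rw [Real.log_rpow h]
      ring
  rw [h2, h3, h4, h1, Real.log_rpow (by positivity),
    Real.log_mul hw0.ne' hTs_pos.ne', Real.log_mul hw0.ne' hT1_pos.ne']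
  exact final_alg (Real.log (((2:ℝ)^n)⁻¹)) (Real.log (∑ i, hH.eigenvalues i ^ s))
    (Real.log (∑ i, hH.eigenvalues i))
    (∑ i, hH.eigenvalues i ^ s * Real.log (hH.eigenvalues i))
    (∑ i, hH.eigenvalues i ^ s) (((2:ℝ)^n)⁻¹) s hw0 hTs_pos hs hkey


end
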